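/- Let r, k, s, H2 be positive integers with k < r, -2 ≤ k²·H2 - 2·r·s < 2·r - 2, and H2 > 2·r. Then (r - s)² + k²·(2·H2 + 4) < (r + s + 2)². -/
import Mathlib

theorem stmt_2 (r k s H2 : ℤ) (hr : 0 < r) (hk : 0 < k) (hs : 0 < s) (hH : 0 < H2)
    (hkr : k < r) (h1 : -2 ≤ k ^ 2 * H2 - 2 * r * s) (h2 : k ^ 2 * H2 - 2 * r * s < 2 * r - 2)
    (hH2 : 2 * r < H2) :
    (r - s) ^ 2 + k ^ 2 * (2 * H2 + 4) < (r + s + 2) ^ 2 := by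
  have hk2 : (0:ℤ) < k ^ 2 := by positivity
  have hstep : k ^ 2 * (2 * r + 1) ≤ k ^ 2 * H2 := by nlinarith
  have hskey : k ^ 2 ≤ s + 2 := by nlinarith [mul_pos hr hs]
  nlinarith [mul_pos hr hs, mul_nonneg (sub_nonneg.2 hskey) (le_of_lt hk2)]
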